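/- Let X be a real Banach space with dual X*, let θ > θ_0 > 0, and let φ, u ∈ X with ‖φ‖_X ≤ C and ‖u‖_X ≤ C for some constant C > 0. Let d ≥ 1 and σ_1, …, σ_d ∈ X* be such that |σ_j(φ − u)| ≤ θ_0 for every j ∈ {1, …, d}. Then for every σ ∈ X* one has |σ(φ − u)| ≤ 2C ‖σ‖_{X*}; and moreover, for every t ∈ [0, θ/θ_0], every c ∈ ℝ^d with Σ_{j=1}^d |c_j| ≤ t, and every ρ ∈ X* with ‖ρ − Σ_{j=1}^d c_j σ_j‖_{X*} ≤ (θ − t θ_0)/(2C), one has |σ(φ − u)| ≤ 2C ‖σ − ρ‖_{X*} + θ. Consequently |σ(φ − u)| ≤ min{ 2C ‖σ‖_{X*}, 2C dist_{X*}(σ, Reach({σ_1, …, σ_d}, 2C, θ, θ_0)) + θ }. -/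

import Mathlib

open Metric

/-- The reach set `Reach({σ₁,…,σ_d}, c, θ, θ₀)` of a finite family of functionals. -/
def Reach {X : Type*} [NormedAddCommGroup X] [NormedSpace ℝ X]
    {d : ℕ} (σs : Fin d → StrongDual ℝ X) (c θ θ₀ : ℝ) :
    Set (StrongDual ℝ X) :=
  {σ | ∃ τ : ℝ, 0 ≤ τ ∧ τ ≤ θ / θ₀ ∧
    ∃ β : Fin d → ℝ, (∑ j, |β j|) ≤ τ ∧ ‖σ - ∑ j, β j • σs j‖ ≤ (θ - τ * θ₀) / c}

/-- Estimates for `|σ(φ - u)|` in terms of the distance to the reach set. -/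
theorem estimate_via_reach
    {X : Type*} [NormedAddCommGroup X] [NormedSpace ℝ X] [CompleteSpace X]
    (θ θ₀ C : ℝ) (hθ₀ : 0 < θ₀) (hθ : θ₀ < θ) (hC : 0 < C)
    (φ u : X) (hφ : ‖φ‖ ≤ C) (hu : ‖u‖ ≤ C)
    (d : ℕ) (hd : 1 ≤ d) (σs : Fin d → StrongDual ℝ X)
    (hmatch : ∀ j, |σs j (φ - u)| ≤ θ₀)
    (σ : StrongDual ℝ X) :
    |σ (φ - u)| ≤ 2 * C * ‖σ‖ ∧
    (∀ t : ℝ, 0 ≤ t → t ≤ θ / θ₀ →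
      ∀ c : Fin d → ℝ, (∑ j, |c j|) ≤ t →
        ∀ ρ : StrongDual ℝ X, ‖ρ - ∑ j, c j • σs j‖ ≤ (θ - t * θ₀) / (2 * C) →
          |σ (φ - u)| ≤ 2 * C * ‖σ - ρ‖ + θ) ∧
    |σ (φ - u)| ≤ min (2 * C * ‖σ‖) (2 * C * infDist σ (Reach σs (2 * C) θ θ₀) + θ) := by

  have hv : ‖φ - u‖ ≤ 2 * C := by
    calc ‖φ - u‖ ≤ ‖φ‖ + ‖u‖ := norm_sub_le _ _
    _ ≤ 2 * C := by linarith
  have key : ∀ ρ : StrongDual ℝ X, |ρ (φ - u)| ≤ ‖ρ‖ * (2 * C) := by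
    intro ρ
    calc |ρ (φ - u)| = ‖ρ (φ - u)‖ := (Real.norm_eq_abs _).symm
    _ ≤ ‖ρ‖ * ‖φ - u‖ := ρ.le_opNorm _
    _ ≤ ‖ρ‖ * (2 * C) := by
        exact mul_le_mul_of_nonneg_left hv (norm_nonneg _)
  have h1 : |σ (φ - u)| ≤ 2 * C * ‖σ‖ := by
    have := key σ; linarith [this]
  have h2 : ∀ t : ℝ, 0 ≤ t → t ≤ θ / θ₀ →
      ∀ c : Fin d → ℝ, (∑ j, |c j|) ≤ t →
        ∀ ρ : StrongDual ℝ X, ‖ρ - ∑ j, c j • σs j‖ ≤ (θ - t * θ₀) / (2 * C) →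
          |σ (φ - u)| ≤ 2 * C * ‖σ - ρ‖ + θ := by
    intro t ht0 ht c hc ρ hρ
    set S : StrongDual ℝ X := ∑ j, c j • σs j with hS
    have hSeval : S (φ - u) = ∑ j, c j * σs j (φ - u) := by
      simp [hS, ContinuousLinearMap.sum_apply]
    have hSbound : |S (φ - u)| ≤ t * θ₀ := by
      rw [hSeval]
      calc |∑ j, c j * σs j (φ - u)| ≤ ∑ j, |c j * σs j (φ - u)| :=
            Finset.abs_sum_le_sum_abs _ _
      _ = ∑ j, |c j| * |σs j (φ - u)| := by simp [abs_mul]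
      _ ≤ ∑ j, |c j| * θ₀ := by
            apply Finset.sum_le_sum
            intro j _
            exact mul_le_mul_of_nonneg_left (hmatch j) (abs_nonneg _)
      _ = (∑ j, |c j|) * θ₀ := by rw [Finset.sum_mul]
      _ ≤ t * θ₀ := mul_le_mul_of_nonneg_right hc hθ₀.le
    have hρS : |(ρ - S) (φ - u)| ≤ θ - t * θ₀ := by
      calc |(ρ - S) (φ - u)| ≤ ‖ρ - S‖ * (2 * C) := key _
      _ ≤ ((θ - t * θ₀) / (2 * C)) * (2 * C) :=
          mul_le_mul_of_nonneg_right hρ (by linarith)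
      _ = θ - t * θ₀ := by field_simp
    have hσρ : |(σ - ρ) (φ - u)| ≤ 2 * C * ‖σ - ρ‖ := by
      have := key (σ - ρ); linarith
    have hsplit : σ (φ - u) = (σ - ρ) (φ - u) + (ρ - S) (φ - u) + S (φ - u) := by
      simp
    calc |σ (φ - u)| ≤ |(σ - ρ) (φ - u)| + |(ρ - S) (φ - u)| + |S (φ - u)| := by
          rw [hsplit]; exact (abs_add_le _ _).trans (by gcongr; exact abs_add_le _ _)
    _ ≤ 2 * C * ‖σ - ρ‖ + (θ - t * θ₀) + t * θ₀ := by gcongr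
    _ = 2 * C * ‖σ - ρ‖ + θ := by ring
  refine ⟨h1, h2, le_min h1 ?_⟩
  have hne : (Reach σs (2 * C) θ θ₀).Nonempty := by
    refine ⟨0, 0, le_refl 0, div_nonneg (by linarith) hθ₀.le, 0, by simp, ?_⟩
    simp only [Pi.zero_apply, zero_smul, Finset.sum_const_zero, sub_zero, norm_zero, zero_mul]
    exact div_nonneg (by linarith) (by linarith)
  have hb : ∀ ρ ∈ Reach σs (2 * C) θ θ₀, (|σ (φ - u)| - θ) / (2 * C) ≤ dist σ ρ := by
    rintro ρ ⟨τ, hτ0, hτ, β, hβ, hρ⟩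
    have := h2 τ hτ0 hτ β hβ ρ hρ
    rw [dist_eq_norm]
    rw [div_le_iff₀ (by linarith)]
    linarith [this]
  have hinf : (|σ (φ - u)| - θ) / (2 * C) ≤ infDist σ (Reach σs (2 * C) θ θ₀) := by
    by_contra hcon
    push_neg at hcon
    obtain ⟨y, hy, hlt⟩ := (infDist_lt_iff hne).mp hcon
    exact absurd (hb y hy) (not_le.mpr hlt)
  rw [div_le_iff₀ (by linarith)] at hinf
  linarith
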